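/- For every nonzero real t, every even integer n, and every k ∈ ℕ, |Γ(1/2−it−n/2+k)·Γ(1−2it) / (Γ(1/2−it−n/2)·Γ(1−2it+k))| ≤ Π_{j=1}^{k} (1 + (|n|/2+1)/j). (Equivalently, the left-hand side equals |Π_{j=1}^{k} (j − 1/2 − it − n/2)/(j − 2it)|, and each factor has modulus at most 1 + (|n|/2+1)/j.) -/

import Mathlib

set_option maxHeartbeats 1000000 in

theorem stmt14 (t : ℝ) (ht : t ≠ 0) (n : ℤ) (hn : Even n) (k : ℕ) :
    Norm.norm
        (Complex.Gamma ((1 : ℂ) / 2 - Complex.I * (t : ℂ) - (n : ℂ) / 2 + (k : ℂ)) *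
            Complex.Gamma (1 - 2 * Complex.I * (t : ℂ)) /
          (Complex.Gamma ((1 : ℂ) / 2 - Complex.I * (t : ℂ) - (n : ℂ) / 2) *
            Complex.Gamma (1 - 2 * Complex.I * (t : ℂ) + (k : ℂ)))) ≤
      ∏ j ∈ Finset.Icc 1 k, (1 + (|(n : ℝ)| / 2 + 1) / (j : ℝ)) := by
  induction k with
  | zero =>
      simp only [Nat.cast_zero, add_zero]
      rw [show Finset.Icc 1 0 = (∅ : Finset ℕ) from rfl, Finset.prod_empty, norm_div]
      exact div_le_one_of_le₀ le_rfl (norm_nonneg _)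
  | succ k ih =>
      set a : ℂ := (1 : ℂ) / 2 - Complex.I * (t : ℂ) - (n : ℂ) / 2 with ha
      set b : ℂ := 1 - 2 * Complex.I * (t : ℂ) with hb
      have hA : a + (k : ℂ) ≠ 0 := by
        intro h
        have := congrArg Complex.im h
        simp [ha] at this
        exact ht this
      have hB : b + (k : ℂ) ≠ 0 := by
        intro h
        have := congrArg Complex.im h
        simp [hb] at this
        exact ht this
      have h1 : a + ((k : ℕ) + 1 : ℕ) = (a + k) + 1 := by push_cast; ring
      have h2 : b + ((k : ℕ) + 1 : ℕ) = (b + k) + 1 := by push_cast; ring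
      rw [h1, h2, Complex.Gamma_add_one _ hA, Complex.Gamma_add_one _ hB,
        Finset.prod_Icc_succ_top (by omega : 1 ≤ k + 1)]
      have key : Norm.norm ((a + k) * Complex.Gamma (a + k) * Complex.Gamma b /
            (Complex.Gamma a * ((b + k) * Complex.Gamma (b + k)))) =
          Norm.norm (Complex.Gamma (a + k) * Complex.Gamma b /
            (Complex.Gamma a * Complex.Gamma (b + k))) *
          (Norm.norm (a + k) / Norm.norm (b + k)) := by
        simp only [norm_div, norm_mul]
        ring
      rw [key]
      have hk1 : (0:ℝ) < (k:ℝ) + 1 := by positivity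
      have hs1 : (Norm.norm (a + k))^2 = ((1:ℝ)/2 - n/2 + k)^2 + t^2 := by
        rw [Complex.sq_norm, Complex.normSq_apply, ha]
        simp
        ring
      have hs2 : (Norm.norm (b + k))^2 = ((k:ℝ) + 1)^2 + 4 * t^2 := by
        rw [Complex.sq_norm, Complex.normSq_apply, hb]
        simp
        ring
      have hfac : Norm.norm (a + k) / Norm.norm (b + k) ≤
          1 + (|(n:ℝ)| / 2 + 1) / ((k:ℕ) + 1 : ℕ) := by
        have hbpos : 0 < Norm.norm (b + k) := norm_pos_iff.mpr hB
        rw [div_le_iff₀ hbpos]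
        have e : (1 + (|(n:ℝ)| / 2 + 1) / ((k:ℕ) + 1 : ℕ)) =
            (((k:ℝ) + 1) + (|(n:ℝ)| / 2 + 1)) / ((k:ℝ) + 1) := by
          push_cast; field_simp
        rw [e, div_mul_eq_mul_div, le_div_iff₀ hk1]
        set M : ℝ := ((k:ℝ) + 1) + (|(n:ℝ)| / 2 + 1) with hM
        clear_value M
        have hMnn : (0:ℝ) ≤ M := by rw [hM]; positivity
        have hx1 : ((1:ℝ)/2 - n/2 + k)^2 ≤ M^2 := by
          rcases abs_cases ((n:ℝ)) with ⟨hx, _⟩ | ⟨hx, _⟩ <;> rw [hM, hx] <;> nlinarith [sq_nonneg ((k:ℝ))]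
        have hMk : (k:ℝ) + 1 ≤ M := by
          have : (0:ℝ) ≤ |(n:ℝ)| := abs_nonneg _
          rw [hM]; linarith
        have hx2 : ((k:ℝ)+1)^2 ≤ 4 * M^2 := by
          nlinarith [mul_le_mul hMk hMk (le_of_lt hk1) hMnn, sq_nonneg M]
        have e1 : (Norm.norm (a + k) * ((k:ℝ)+1))^2
            = (((1:ℝ)/2 - n/2 + k)^2 + t^2) * ((k:ℝ)+1)^2 := by rw [mul_pow, hs1]
        have e2 : (M * Norm.norm (b + k))^2 = M^2 * (((k:ℝ)+1)^2 + 4 * t^2) := by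
          rw [mul_pow, hs2]
        have hsq : (Norm.norm (a + k) * ((k:ℝ)+1))^2 ≤ (M * Norm.norm (b + k))^2 := by
          rw [e1, e2]
          nlinarith [mul_le_mul_of_nonneg_right hx1 (sq_nonneg ((k:ℝ)+1)),
            mul_le_mul_of_nonneg_left hx2 (sq_nonneg t)]
        nlinarith [hsq, mul_nonneg hMnn (norm_nonneg (b + k)),
          mul_nonneg (norm_nonneg (a + k)) (le_of_lt hk1)]
      calc _ ≤ (∏ j ∈ Finset.Icc 1 k, (1 + (|(n : ℝ)| / 2 + 1) / (j : ℝ))) *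
            (1 + (|(n:ℝ)| / 2 + 1) / ((k:ℕ) + 1 : ℕ)) := by
              apply mul_le_mul ih hfac (div_nonneg (norm_nonneg _) (norm_nonneg _))
              exact Finset.prod_nonneg fun j _ => by positivity
        _ = _ := by push_cast; ring
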